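/- Let 𝔤 be a compact Lie algebra, 𝔥 ⊆ 𝔤 a subalgebra with J an 𝔥-invariant integrable complex structure on 𝔤/𝔥, and let 𝔭 = 𝔞_ℂ + p⁻¹((𝔤/𝔥)₊) be the associated parabolic subalgebra of 𝔤_ℂ, with 𝔪 = 𝔭 ∩ 𝔤 = 𝔲 ⊕ 𝔥 where 𝔲 is a complement of 𝔞∩𝔥 in 𝔞. Then [𝔪, 𝔪] = [𝔥, 𝔥]. -/

import Mathlib

open Module TensorProduct

/-- The quotient map `𝔤 → 𝔤/𝔥`. -/
def qmk {L : Type*} [LieRing L] [LieAlgebra ℝ L] (H : LieSubalgebra ℝ L) :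
    L →ₗ[ℝ] L ⧸ H.toSubmodule := H.toSubmodule.mkQ

/-- `J` is integrable: the Nijenhuis bilinear map
`N(u,v) = p[x,y] + J(p[x',y] + p[x,y']) − p[x',y']` vanishes for all lifts. -/
def Integrable {L : Type*} [LieRing L] [LieAlgebra ℝ L] (H : LieSubalgebra ℝ L)
    (J : (L ⧸ H.toSubmodule) →ₗ[ℝ] (L ⧸ H.toSubmodule)) : Prop :=
  ∀ x y x' y' : L, qmk H x' = J (qmk H x) → qmk H y' = J (qmk H y) →
    qmk H ⁅x, y⁆ + J (qmk H ⁅x', y⁆ + qmk H ⁅x, y'⁆) - qmk H ⁅x', y'⁆ = 0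

/-- `𝔩 = p⁻¹((𝔤/𝔥)₊) ⊆ 𝔤_ℂ`: the preimage under the complexified quotient map
`p : 𝔤_ℂ → (𝔤/𝔥)_ℂ` of the `i`-eigenspace of the complexification of `J`. -/
noncomputable def lsub {L : Type*} [LieRing L] [LieAlgebra ℝ L] (H : LieSubalgebra ℝ L)
    (J : (L ⧸ H.toSubmodule) →ₗ[ℝ] (L ⧸ H.toSubmodule)) : Submodule ℂ (ℂ ⊗[ℝ] L) :=
  Submodule.comap ((qmk H).baseChange ℂ)
    (Module.End.eigenspace (J.baseChange ℂ) Complex.I)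


/-- The span of all brackets of elements of a subset `S` of `𝔤`, i.e. `[S, S]`. -/
def bracketSpan {L : Type*} [LieRing L] [LieAlgebra ℝ L] (S : Set L) : Submodule ℝ L :=
  Submodule.span ℝ {z : L | ∃ x ∈ S, ∃ y ∈ S, z = ⁅x, y⁆}

lemma bracketSpan_mono {L : Type*} [LieRing L] [LieAlgebra ℝ L] {S T : Set L}
    (h : S ⊆ T) : bracketSpan S ≤ bracketSpan T := by
  apply Submodule.span_mono
  rintro z ⟨x, hx, y, hy, rfl⟩
  exact ⟨x, h hx, y, h hy, rfl⟩

lemma bracket_mem_bracketSpan {L : Type*} [LieRing L] [LieAlgebra ℝ L] {S : Set L}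
    {x y : L} (hx : x ∈ S) (hy : y ∈ S) : ⁅x, y⁆ ∈ bracketSpan S :=
  Submodule.subset_span ⟨x, hx, y, hy, rfl⟩

lemma bracketSpan_le {L : Type*} [LieRing L] [LieAlgebra ℝ L] {S : Set L}
    {N : Submodule ℝ L} (h : ∀ x ∈ S, ∀ y ∈ S, ⁅x, y⁆ ∈ N) : bracketSpan S ≤ N := by
  apply Submodule.span_le.2
  rintro z ⟨x, hx, y, hy, rfl⟩
  exact h x hx y hy

/-- For a Lie algebra with an invariant inner product, the derived algebra of any
subalgebra `m` (given as a bracket-closed submodule) is perfect: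
`[m, m] ⊆ [[m, m], [m, m]]`. -/
lemma bracketSpan_perfect {L : Type*} [LieRing L] [LieAlgebra ℝ L] [FiniteDimensional ℝ L]
    (B : L →ₗ[ℝ] L →ₗ[ℝ] ℝ)
    (hsymm : ∀ x y : L, B x y = B y x)
    (hpos : ∀ x : L, x ≠ 0 → 0 < B x x)
    (hinvt : ∀ x y z : L, B ⁅x, y⁆ z = - B y ⁅x, z⁆)
    (m : Submodule ℝ L) (hcl : ∀ x ∈ m, ∀ y ∈ m, ⁅x, y⁆ ∈ m) :
    bracketSpan (m : Set L) ≤ bracketSpan ((bracketSpan (m : Set L) : Submodule ℝ L) : Set L) := by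
  letI cd : InnerProductSpace.Core ℝ L :=
    { inner := fun x y => B x y
      conj_inner_symm := fun x y => hsymm y x
      re_inner_nonneg := fun x => by
        rcases eq_or_ne x 0 with h | h
        · simp [h]
        · exact le_of_lt (hpos x h)
      add_left := fun x y z => by simp
      smul_left := fun x y r => by simp [mul_comm]
      definite := fun x hx => by
        by_contra h
        exact absurd hx (ne_of_gt (hpos x h)) }
  letI : NormedAddCommGroup L := cd.toNormedAddCommGroup
  letI : InnerProductSpace ℝ L := InnerProductSpace.ofCore cd.toCore
  have hinner : ∀ x y : L, (inner ℝ x y : ℝ) = B x y := fun _ _ => rfl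
  set D : Submodule ℝ L := bracketSpan (m : Set L) with hD
  have hDm : D ≤ m := bracketSpan_le (fun x hx y hy => hcl x hx y hy)
  -- the center of m
  let Z : Submodule ℝ L :=
    { carrier := {x : L | x ∈ m ∧ ∀ y ∈ m, ⁅x, y⁆ = 0}
      zero_mem' := ⟨m.zero_mem, fun y _ => zero_lie y⟩
      add_mem' := fun ha hb => ⟨m.add_mem ha.1 hb.1,
        fun y hy => by rw [add_lie, ha.2 y hy, hb.2 y hy, add_zero]⟩
      smul_mem' := fun r x hx => ⟨m.smul_mem r hx.1,
        fun y hy => by rw [smul_lie, hx.2 y hy, smul_zero]⟩ }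
  have hZm : Z ≤ m := fun x hx => hx.1
  -- Dᗮ ⊓ m ≤ Z
  have fact1 : Dᗮ ⊓ m ≤ Z := by
    rintro x ⟨hxD, hxm⟩
    refine ⟨hxm, fun y hy => ?_⟩
    by_contra hne
    have h1 : B ⁅y, ⁅x, y⁆⁆ x = B ⁅x, y⁆ ⁅x, y⁆ := by
      have hyx : ⁅y, x⁆ = -⁅x, y⁆ := by rw [← lie_skew x y, neg_neg]
      rw [hinvt, hyx, map_neg, neg_neg]
    have h2 : ⁅y, ⁅x, y⁆⁆ ∈ D := bracket_mem_bracketSpan hy (hcl x hxm y hy)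
    have h3 : (inner ℝ (⁅y, ⁅x, y⁆⁆ : L) x : ℝ) = 0 :=
      (Submodule.mem_orthogonal D x).1 hxD _ h2
    rw [hinner] at h3
    rw [h3] at h1
    exact absurd h1.symm (ne_of_gt (hpos _ hne))
  -- Z ≤ Dᗮ
  have fact2 : Z ≤ Dᗮ := by
    intro z hz
    rw [Submodule.mem_orthogonal]
    intro d hd
    induction hd using Submodule.span_induction with
    | mem w hw =>
      obtain ⟨x, hx, y, hy, rfl⟩ := hw
      have hxz : ⁅x, z⁆ = 0 := by rw [← lie_skew x z, hz.2 x hx, neg_zero]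
      rw [hinner, hinvt, hxz]; simp
    | zero => simp
    | add a b _ _ ha hb => rw [inner_add_left, ha, hb, add_zero]
    | smul r a _ ha => rw [inner_smul_left, ha, mul_zero]
  -- Zᗮ ⊓ m ≤ D
  have fact4 : Zᗮ ⊓ m ≤ D := by
    rintro x ⟨hxZ, hxm⟩
    rw [← Submodule.orthogonal_orthogonal D]
    rw [Submodule.mem_orthogonal]
    intro v hv
    obtain ⟨v₁, hv₁, v₂, hv₂, rfl⟩ := Submodule.mem_sup.1
      (by rw [Submodule.sup_orthogonal_of_hasOrthogonalProjection]; exact Submodule.mem_top :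
        v ∈ m ⊔ mᗮ)
    have hv₂D : v₂ ∈ Dᗮ := Submodule.orthogonal_le hDm hv₂
    have hv₁D : v₁ ∈ Dᗮ := by
      have := Dᗮ.sub_mem hv hv₂D; simpa using this
    have hv₁Z : v₁ ∈ Z := fact1 ⟨hv₁D, hv₁⟩
    rw [inner_add_left]
    have e1 : (inner ℝ v₁ x : ℝ) = 0 := (Submodule.mem_orthogonal Z x).1 hxZ _ hv₁Z
    have e2 : (inner ℝ v₂ x : ℝ) = 0 := by rw [real_inner_comm]; exact hv₂ x hxm
    rw [e1, e2, add_zero]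
  -- decomposition m = Z ⊔ (Zᗮ ⊓ m)
  have fact3 : Z ⊔ (Zᗮ ⊓ m) = m := Submodule.sup_orthogonal_inf_of_hasOrthogonalProjection hZm
  -- conclude
  apply bracketSpan_le
  intro x hx y hy
  obtain ⟨zx, hzx, sx, hsx, rfl⟩ := Submodule.mem_sup.1 (fact3 ▸ hx)
  obtain ⟨zy, hzy, sy, hsy, rfl⟩ := Submodule.mem_sup.1 (fact3 ▸ hy)
  have hb : ⁅zx + sx, zy + sy⁆ = ⁅sx, sy⁆ := by
    have h1 : ⁅zx, zy⁆ = 0 := hzx.2 zy (hZm hzy)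
    have h2 : ⁅zx, sy⁆ = 0 := hzx.2 sy hsy.2
    have h3 : ⁅sx, zy⁆ = 0 := by rw [← lie_skew sx zy, hzy.2 sx hsx.2, neg_zero]
    rw [add_lie, lie_add, lie_add, h1, h2, h3]; simp
  rw [hb]
  exact bracket_mem_bracketSpan (fact4 hsx) (fact4 hsy)

/-- `𝔞` normalizes `𝔥`: since `𝔞` normalizes `𝔩 = p⁻¹((𝔤/𝔥)₊)`, for `t ∈ 𝔞`, `h ∈ 𝔥`,
the real vector `p(1 ⊗ ⁅t,h⁆)` lies in the `i`-eigenspace of `J_ℂ`, hence vanishes. -/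
lemma aH {L : Type*} [LieRing L] [LieAlgebra ℝ L]
    (H : LieSubalgebra ℝ L)
    (J : (L ⧸ H.toSubmodule) →ₗ[ℝ] (L ⧸ H.toSubmodule))
    (a : LieSubalgebra ℝ L)
    (hnorm : ∀ t ∈ a, ∀ x ∈ lsub H J, ⁅(1 : ℂ) ⊗ₜ[ℝ] t, x⁆ ∈ lsub H J) :
    ∀ t ∈ a, ∀ h ∈ H.toSubmodule, ⁅t, h⁆ ∈ H.toSubmodule := by
  intro t ht h hh
  have h1 : ((1 : ℂ) ⊗ₜ[ℝ] h) ∈ lsub H J := by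
    rw [lsub, Submodule.mem_comap, LinearMap.baseChange_tmul]
    have hq : qmk H h = 0 := (Submodule.Quotient.mk_eq_zero _).2 hh
    rw [hq, TensorProduct.tmul_zero]
    exact Submodule.zero_mem _
  have h2 := hnorm t ht _ h1
  rw [LieAlgebra.ExtendScalars.bracket_tmul, one_mul, lsub, Submodule.mem_comap] at h2
  have h3 := Module.End.mem_eigenspace_iff.1 h2
  rw [LinearMap.baseChange_tmul] at h3
  set v : L ⧸ H.toSubmodule := qmk H ⁅t, h⁆ with hv
  rw [LinearMap.baseChange_tmul] at h3
  have hr : Complex.I • ((1 : ℂ) ⊗ₜ[ℝ] v) = Complex.I ⊗ₜ[ℝ] v := by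
    rw [TensorProduct.smul_tmul', smul_eq_mul, mul_one]
  rw [hr] at h3
  have h4 := congrArg (fun w => (TensorProduct.lid ℝ (L ⧸ H.toSubmodule))
    (LinearMap.rTensor (L ⧸ H.toSubmodule) Complex.imLm w)) h3
  simp only [LinearMap.rTensor_tmul, TensorProduct.lid_tmul, Complex.imLm_coe,
    Complex.one_im, Complex.I_im, zero_smul, one_smul] at h4
  exact (Submodule.Quotient.mk_eq_zero _).1 h4.symm

/-- `𝔤` compact, `J` an `𝔥`-invariant integrable complex structure on
`𝔤/𝔥`, `𝔭 = 𝔞_ℂ + p⁻¹((𝔤/𝔥)₊)` the associated parabolic subalgebra of `𝔤_ℂ` (for `𝔞`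
a Cartan subalgebra normalizing `𝔩 = p⁻¹((𝔤/𝔥)₊)`), and `𝔪 = 𝔭 ∩ 𝔤 = 𝔲 ⊕ 𝔥` where `𝔲`
is a complement of `𝔞 ∩ 𝔥` in `𝔞`.  Then `[𝔪, 𝔪] = [𝔥, 𝔥]`. -/
theorem stmt13 {L : Type*} [LieRing L] [LieAlgebra ℝ L] [FiniteDimensional ℝ L]
    (B : L →ₗ[ℝ] L →ₗ[ℝ] ℝ)
    (hsymm : ∀ x y : L, B x y = B y x)
    (hpos : ∀ x : L, x ≠ 0 → 0 < B x x)
    (hinvt : ∀ x y z : L, B ⁅x, y⁆ z = - B y ⁅x, z⁆)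
    (H : LieSubalgebra ℝ L)
    (J : (L ⧸ H.toSubmodule) →ₗ[ℝ] (L ⧸ H.toSubmodule))
    (hJ2 : J ∘ₗ J = -LinearMap.id)
    (hinv : ∀ h ∈ H, ∀ x y : L,
      qmk H y = J (qmk H x) → J (qmk H ⁅h, x⁆) = qmk H ⁅h, y⁆)
    (hint : Integrable H J)
    (a : LieSubalgebra ℝ L) (habel : IsLieAbelian ↥a)
    (hamax : ∀ a' : LieSubalgebra ℝ L, IsLieAbelian ↥a' → a ≤ a' → a' = a)
    (hnorm : ∀ t ∈ a, ∀ x ∈ lsub H J, ⁅(1 : ℂ) ⊗ₜ[ℝ] t, x⁆ ∈ lsub H J)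
    -- `𝔪 = 𝔭 ∩ 𝔤` for the parabolic `𝔭 = 𝔞_ℂ + 𝔩`:
    (m : Submodule ℝ L)
    (hm : m = Submodule.comap (TensorProduct.mk ℝ ℂ L 1)
      (Submodule.restrictScalars ℝ (Submodule.baseChange ℂ a.toSubmodule ⊔ lsub H J)))
    -- `𝔲` a complement of `𝔞 ∩ 𝔥` in `𝔞`, and `𝔪 = 𝔲 ⊕ 𝔥`:
    (u : Submodule ℝ L)
    (hu1 : u ⊓ (a.toSubmodule ⊓ H.toSubmodule) = ⊥)
    (hu2 : u ⊔ (a.toSubmodule ⊓ H.toSubmodule) = a.toSubmodule)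
    (hmu : m = u ⊔ H.toSubmodule) :
    bracketSpan (m : Set L) = bracketSpan (H : Set L) := by
  have hu_a : u ≤ a.toSubmodule := le_sup_left.trans hu2.le
  have key : ∀ t ∈ a.toSubmodule, ∀ h ∈ H.toSubmodule, ⁅t, h⁆ ∈ H.toSubmodule :=
    fun t ht => aH H J a hnorm t ht
  -- `𝔞` is abelian:
  have habr : ∀ x ∈ a.toSubmodule, ∀ y ∈ a.toSubmodule, ⁅x, y⁆ = (0 : L) := by
    intro x hx y hy
    have h0 : (⁅(⟨x, hx⟩ : a), (⟨y, hy⟩ : a)⁆ : a) = 0 := trivial_lie_zero _ _ _ _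
    exact congrArg Subtype.val h0
  -- `[m, m] ⊆ 𝔥`:
  have hbH : bracketSpan (m : Set L) ≤ H.toSubmodule := by
    apply bracketSpan_le
    intro x hx y hy
    obtain ⟨u₁, hu₁, h₁, hh₁, rfl⟩ := Submodule.mem_sup.1 (hmu ▸ hx)
    obtain ⟨u₂, hu₂, h₂, hh₂, rfl⟩ := Submodule.mem_sup.1 (hmu ▸ hy)
    have e1 : ⁅u₁, u₂⁆ = (0 : L) := habr u₁ (hu_a hu₁) u₂ (hu_a hu₂)
    have e2 : ⁅u₁, h₂⁆ ∈ H.toSubmodule := key u₁ (hu_a hu₁) h₂ hh₂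
    have e3 : ⁅h₁, u₂⁆ ∈ H.toSubmodule := by
      have := key u₂ (hu_a hu₂) h₁ hh₁
      rw [← lie_skew h₁ u₂]
      exact H.toSubmodule.neg_mem this
    have e4 : ⁅h₁, h₂⁆ ∈ H.toSubmodule := H.lie_mem hh₁ hh₂
    rw [add_lie, lie_add, lie_add, e1, zero_add]
    exact H.toSubmodule.add_mem e2 (H.toSubmodule.add_mem e3 e4)
  have hHm : H.toSubmodule ≤ m := hmu ▸ le_sup_right
  -- `m` is closed under brackets:
  have hcl : ∀ x ∈ m, ∀ y ∈ m, ⁅x, y⁆ ∈ m := fun x hx y hy =>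
    hHm (hbH (bracket_mem_bracketSpan hx hy))
  apply le_antisymm
  · calc bracketSpan (m : Set L)
        ≤ bracketSpan ((bracketSpan (m : Set L) : Submodule ℝ L) : Set L) :=
          bracketSpan_perfect B hsymm hpos hinvt m hcl
      _ ≤ bracketSpan (H : Set L) := bracketSpan_mono (fun z hz => hbH hz)
  · exact bracketSpan_mono (fun z hz => hHm hz)
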